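/- arXiv:0710.1151 — 10 statements merged into one kernel-verified Lean document; each statement's English description precedes it below -/
import Mathlib

section
/- Let P be a probability measure on a measurable space Ω and let r : Ω → [0,∞) be measurable. For γ ∈ [0,1] define D_γ = {ω₀ ∈ Ω : P({ω : r(ω) > r(ω₀)}) ≤ γ}. Then D_γ is measurable and P(D_γ) ≥ γ. -/
open MeasureTheory Filter Topology
open scoped ENNReal NNReal

/-- Lemma 1 (first assertion): for a probability measure `P` and measurable
`r : Ω → [0,∞)`, the region `D_γ = {ω₀ : P(r > r ω₀) ≤ γ}` is measurable and
`P(D_γ) ≥ γ`. -/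
theorem surprise_region_measurable_and_ge
    {Ω : Type*} [MeasurableSpace Ω] (P : Measure Ω) [IsProbabilityMeasure P]
    (r : Ω → ℝ) (hr : Measurable r) (hr0 : ∀ ω, 0 ≤ r ω)
    (γ : ℝ≥0∞) (hγ : γ ≤ 1) :
    MeasurableSet {ω₀ | P {ω | r ω > r ω₀} ≤ γ} ∧
      γ ≤ P {ω₀ | P {ω | r ω > r ω₀} ≤ γ} := by
  set F : ℝ → ℝ≥0∞ := fun t => P {ω | r ω > t} with hF
  have hFanti : Antitone F := by
    intro s t hst
    exact measure_mono (fun ω hω => lt_of_le_of_lt hst hω)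
  set A : Set ℝ := {t | F t ≤ γ} with hA
  have hAupper : IsUpperSet A := by
    intro s t hst hs
    exact le_trans (hFanti hst) hs
  have hAmeas : MeasurableSet A := hAupper.ordConnected.measurableSet
  have hD : {ω₀ | P {ω | r ω > r ω₀} ≤ γ} = r ⁻¹' A := rfl
  have hDmeas : MeasurableSet {ω₀ | P {ω | r ω > r ω₀} ≤ γ} := hD ▸ hr hAmeas
  refine ⟨hDmeas, ?_⟩
  rcases eq_or_lt_of_le hγ with hγ1 | hγ1
  · -- γ = 1 : D = univ
    have : {ω₀ | P {ω | r ω > r ω₀} ≤ γ} = Set.univ := by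
      ext ω₀
      simp only [Set.mem_setOf_eq, Set.mem_univ, iff_true]
      rw [hγ1]
      exact prob_le_one
    rw [this, measure_univ]
    exact hγ
  rcases eq_or_lt_of_le (zero_le : (0:ℝ≥0∞) ≤ γ) with hγ0 | hγ0
  · rw [← hγ0]; exact zero_le
  -- 0 < γ < 1
  -- A is nonempty: F n → 0 along ℕ
  have hmeasS : ∀ t : ℝ, MeasurableSet {ω | r ω > t} :=
    fun t => hr measurableSet_Ioi
  have htend : Tendsto (fun n : ℕ => F (n : ℝ)) atTop (𝓝 0) := by
    have h1 : Tendsto (fun n : ℕ => F (n : ℝ)) atTop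
        (𝓝 (P (⋂ n : ℕ, {ω | r ω > (n : ℝ)}))) := by
      refine tendsto_measure_iInter_atTop (fun n => (hmeasS _).nullMeasurableSet)
        (fun m n hmn => ?_) ⟨0, measure_ne_top P _⟩
      exact fun ω hω => show (m:ℝ) < r ω from lt_of_le_of_lt (Nat.cast_le.mpr hmn) hω
    have h2 : (⋂ n : ℕ, {ω | r ω > (n : ℝ)}) = ∅ := by
      ext ω
      simp only [Set.mem_iInter, Set.mem_setOf_eq, Set.mem_empty_iff_false, iff_false, not_forall]
      obtain ⟨n, hn⟩ := exists_nat_gt (r ω)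
      exact ⟨n, not_lt.mpr hn.le⟩
    rwa [h2, measure_empty] at h1
  have hAne : A.Nonempty := by
    obtain ⟨n, hn⟩ := (htend.eventually_lt_const hγ0).exists
    exact ⟨n, hn.le⟩
  have hAbdd : BddBelow A := by
    refine ⟨0, fun t ht => ?_⟩
    by_contra h
    push_neg at h
    have : F t = 1 := by
      have : {ω | r ω > t} = Set.univ :=
        Set.eq_univ_of_forall fun ω => lt_of_lt_of_le h (hr0 ω)
      rw [hF]; simp [this]
    exact absurd (this ▸ ht) (not_le.mpr hγ1)
  set c : ℝ := sInf A with hc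
  have hIoi : Set.Ioi c ⊆ A := by
    intro t ht
    obtain ⟨a, haA, hat⟩ := exists_lt_of_csInf_lt hAne ht
    exact hAupper hat.le haA
  have hlt : ∀ t, t < c → γ < F t := by
    intro t ht
    by_contra h
    push_neg at h
    exact absurd (csInf_le hAbdd h) (not_le.mpr ht)
  by_cases hcA : c ∈ A
  · -- D ⊇ {r ≥ c}, and P {r ≥ c} ≥ γ
    have hsub : {ω | r ω ≥ c} ⊆ r ⁻¹' A := by
      intro ω hω
      have hω2 : c ≤ r ω := hω
      rcases eq_or_lt_of_le hω2 with h | h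
      · simpa [← h] using hcA
      · exact hIoi h
    have hkey : γ ≤ P {ω | r ω ≥ c} := by
      have h1 : Tendsto (fun n : ℕ => F (c - 1 / (n + 1))) atTop
          (𝓝 (P (⋂ n : ℕ, {ω | r ω > c - 1 / (n + 1)}))) := by
        refine tendsto_measure_iInter_atTop (fun n => (hmeasS _).nullMeasurableSet)
          (fun m n hmn => ?_) ⟨0, measure_ne_top P _⟩
        intro ω hω
        have : c - 1 / (m + 1) ≤ c - 1 / (n + 1) := by
          have h1 : (0:ℝ) < m + 1 := by positivity
          have h2 : (m:ℝ) + 1 ≤ n + 1 := by exact_mod_cast Nat.succ_le_succ hmn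
          have := one_div_le_one_div_of_le h1 h2
          linarith
        exact lt_of_le_of_lt this hω
      have h2 : (⋂ n : ℕ, {ω | r ω > c - 1 / (n + 1)}) = {ω | r ω ≥ c} := by
        ext ω
        simp only [Set.mem_iInter, Set.mem_setOf_eq]
        constructor
        · intro h
          by_contra hge
          push_neg at hge
          obtain ⟨n, hn⟩ := exists_nat_one_div_lt (by linarith : (0:ℝ) < c - r ω)
          have := h n
          linarith
        · intro h n
          have : (0:ℝ) < 1 / (n + 1) := by positivity
          linarith
      rw [h2] at h1
      refine ge_of_tendsto h1 (Eventually.of_forall fun n => ?_)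
      refine (hlt _ ?_).le
      have : (0:ℝ) < 1 / (n + 1) := by positivity
      linarith
    calc γ ≤ P {ω | r ω ≥ c} := hkey
    _ ≤ P (r ⁻¹' A) := measure_mono hsub
  · -- D ⊇ {r > c}, and F c > γ
    have hsub : {ω | r ω > c} ⊆ r ⁻¹' A := fun ω hω => hIoi hω
    have : γ < F c := by
      by_contra h
      push_neg at h
      exact hcA h
    calc γ ≤ F c := this.le
    _ ≤ P (r ⁻¹' A) := measure_mono hsub
end

section
/- Let P be a probability measure on a measurable space Ω and let r : Ω → [0,∞) be measurable, and suppose the pushforward measure of r under P (the distribution of r(ω) for ω ∼ P) has no atoms. Then for every γ ∈ [0,1], the set D_γ = {ω₀ ∈ Ω : P({ω : r(ω) > r(ω₀)}) ≤ γ} satisfies P(D_γ) = γ. -/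
open MeasureTheory
open scoped ENNReal NNReal

/-- Lemma 1 (equality assertion): if the distribution of `r` under `P` has no
atoms, then the region `D_γ = {ω₀ : P(r > r ω₀) ≤ γ}` has `P(D_γ) = γ`. -/
theorem surprise_region_eq_of_no_atoms
    {Ω : Type*} [MeasurableSpace Ω] (P : Measure Ω) [IsProbabilityMeasure P]
    (r : Ω → ℝ) (hr : Measurable r) (hr0 : ∀ ω, 0 ≤ r ω)
    (hatoms : ∀ c : ℝ, 0 ≤ c → P {ω | r ω = c} = 0)
    (γ : ℝ≥0∞) (hγ : γ ≤ 1) :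
    P {ω₀ | P {ω | r ω > r ω₀} ≤ γ} = γ := by
  classical
  set F : ℝ → ℝ≥0∞ := fun t => P {ω | r ω > t} with hFdef
  have hmeas : ∀ t : ℝ, MeasurableSet {ω | r ω > t} := fun t => hr measurableSet_Ioi
  have hFanti : ∀ {s t : ℝ}, s ≤ t → F t ≤ F s := by
    intro s t hst
    exact measure_mono (fun ω h => lt_of_le_of_lt hst h)
  set A : Set ℝ := {t | 0 ≤ t ∧ F t ≤ γ} with hAdef
  by_cases hA : A.Nonempty
  · set t₀ := sInf A with ht₀def
    have hbdd : BddBelow A := ⟨0, fun t ht => ht.1⟩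
    have ht₀0 : 0 ≤ t₀ := le_csInf hA fun t ht => ht.1
    -- upper bound: F t₀ ≤ γ
    have hFt₀le : F t₀ ≤ γ := by
      have hU : {ω | r ω > t₀} = ⋃ n : ℕ, {ω | r ω > t₀ + 1/(n+1)} := by
        ext ω
        simp only [Set.mem_setOf_eq, Set.mem_iUnion]
        constructor
        · intro h
          obtain ⟨n, hn⟩ := exists_nat_one_div_lt (sub_pos.mpr h)
          exact ⟨n, by linarith [hn]⟩
        · rintro ⟨n, hn⟩
          have : (0:ℝ) < 1/(n+1) := by positivity
          linarith
      have hmono : Monotone (fun n : ℕ => {ω | r ω > t₀ + 1/(n+1)}) := by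
        intro m n hmn ω hω
        simp only [Set.mem_setOf_eq] at hω ⊢
        have : (1:ℝ)/(n+1) ≤ 1/(m+1) :=
          one_div_le_one_div_of_le (by positivity)
            (by exact_mod_cast add_le_add_left (Nat.cast_le.mpr hmn) 1)
        linarith
      have hdir := hmono.directed_le
      have := Directed.measure_iUnion (μ := P)
        (s := fun n : ℕ => {ω | r ω > t₀ + 1/(n+1)}) hdir
      rw [hFdef]
      simp only
      rw [hU, this]
      refine iSup_le fun n => ?_
      have hpos : (0:ℝ) < 1/(n+1) := by positivity
      obtain ⟨a, haA, halt⟩ := exists_lt_of_csInf_lt hA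
        (show sInf A < t₀ + 1/(n+1) by linarith)
      calc P {ω | r ω > t₀ + 1/(n+1)} ≤ F a := hFanti (le_of_lt halt)
        _ ≤ γ := haA.2
    -- lower bound: P {ω | t₀ ≤ r ω} ≥ γ
    have hlower : γ ≤ P {ω | t₀ ≤ r ω} := by
      have hI : {ω | t₀ ≤ r ω} = ⋂ n : ℕ, {ω | r ω > t₀ - 1/(n+1)} := by
        ext ω
        simp only [Set.mem_setOf_eq, Set.mem_iInter]
        constructor
        · intro h n
          have : (0:ℝ) < 1/(n+1) := by positivity
          linarith
        · intro h
          by_contra hc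
          push_neg at hc
          obtain ⟨n, hn⟩ := exists_nat_one_div_lt (sub_pos.mpr hc)
          have := h n
          linarith [hn]
      have hanti : Antitone (fun n : ℕ => {ω | r ω > t₀ - 1/(n+1)}) := by
        intro m n hmn ω hω
        simp only [Set.mem_setOf_eq] at hω ⊢
        have : (1:ℝ)/(n+1) ≤ 1/(m+1) :=
          one_div_le_one_div_of_le (by positivity)
            (by exact_mod_cast add_le_add_left (Nat.cast_le.mpr hmn) 1)
        linarith
      have hmeq := Directed.measure_iInter (μ := P)
        (fun n : ℕ => (hmeas _).nullMeasurableSet)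
        hanti.directed_ge ⟨0, measure_ne_top P _⟩
      rw [hI, hmeq]
      refine le_iInf fun n => ?_
      by_cases hneg : t₀ - 1/(n+1) < 0
      · have : {ω | r ω > t₀ - 1/(n+1)} = Set.univ := by
          ext ω; simp only [Set.mem_setOf_eq, Set.mem_univ, iff_true]
          exact lt_of_lt_of_le hneg (hr0 ω)
        rw [this, measure_univ]; exact hγ
      · push_neg at hneg
        have hpos : (0:ℝ) < 1/(n+1) := by positivity
        have hnotA : t₀ - 1/(n+1) ∉ A := fun hmem =>
          absurd (csInf_le hbdd hmem) (by linarith)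
        have : ¬ F (t₀ - 1/(n+1)) ≤ γ := fun h => hnotA ⟨hneg, h⟩
        exact le_of_lt (lt_of_not_ge this)
    -- the region equals {ω | t₀ ≤ r ω}
    have hD : {ω₀ | P {ω | r ω > r ω₀} ≤ γ} = {ω | t₀ ≤ r ω} := by
      ext ω₀
      simp only [Set.mem_setOf_eq]
      constructor
      · intro h
        exact csInf_le hbdd ⟨hr0 ω₀, h⟩
      · intro h
        exact le_trans (hFanti h) hFt₀le
    rw [hD]
    refine le_antisymm ?_ hlower
    have hsub : {ω | t₀ ≤ r ω} ⊆ {ω | r ω > t₀} ∪ {ω | r ω = t₀} := by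
      intro ω hω
      have hω' : t₀ ≤ r ω := hω
      rcases lt_or_eq_of_le hω' with h | h
      · exact Or.inl h
      · exact Or.inr h.symm
    calc P {ω | t₀ ≤ r ω} ≤ P {ω | r ω > t₀} + P {ω | r ω = t₀} :=
          le_trans (measure_mono hsub) (measure_union_le _ _)
      _ = F t₀ + 0 := by rw [hatoms t₀ ht₀0]
      _ ≤ γ := by rw [add_zero]; exact hFt₀le
  · -- A empty: region is empty and γ = 0
    rw [Set.not_nonempty_iff_eq_empty] at hA
    have hγ0 : γ = 0 := by
      have hle : ∀ n : ℕ, γ ≤ F n := by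
        intro n
        by_contra hc
        push_neg at hc
        have : (n : ℝ) ∈ A := ⟨Nat.cast_nonneg n, le_of_lt hc⟩
        rw [hA] at this
        exact this
      have hanti : Antitone (fun n : ℕ => {ω | r ω > (n:ℝ)}) := by
        intro m n hmn ω hω
        simp only [Set.mem_setOf_eq] at hω ⊢
        exact lt_of_le_of_lt (by exact_mod_cast hmn) hω
      have hmeq := Directed.measure_iInter (μ := P)
        (fun n : ℕ => (hmeas _).nullMeasurableSet)
        hanti.directed_ge ⟨0, measure_ne_top P _⟩
      have hempty : (⋂ n : ℕ, {ω | r ω > (n:ℝ)}) = ∅ := by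
        ext ω
        simp only [Set.mem_iInter, Set.mem_setOf_eq, Set.mem_empty_iff_false, iff_false]
        intro h
        obtain ⟨n, hn⟩ := exists_nat_ge (r ω)
        exact absurd (h n) (not_lt.mpr hn)
      have h0 : (⨅ n : ℕ, P {ω | r ω > (n:ℝ)}) = 0 := by
        rw [← hmeq, hempty, measure_empty]
      have : γ ≤ 0 := by
        rw [← h0]
        exact le_iInf hle
      exact le_antisymm this (zero_le (a := γ))
    have hDempty : {ω₀ | P {ω | r ω > r ω₀} ≤ γ} = ∅ := by
      ext ω₀
      simp only [Set.mem_setOf_eq, Set.mem_empty_iff_false, iff_false]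
      intro h
      have : r ω₀ ∈ A := ⟨hr0 ω₀, h⟩
      rw [hA] at this
      exact this
    rw [hDempty, measure_empty, hγ0]
end

section
/- Let ν be a σ-finite measure on a measurable space Ω, let P be a probability measure and Q a finite measure on Ω, both absolutely continuous with respect to ν with densities p and q respectively. Fix k > 0 and let C = {ω : p(ω) ≥ k·q(ω)}. Then for every measurable set D ⊆ Ω with P(D) ≥ P(C), one has Q(D) ≥ Q(C). -/
open MeasureTheory
open scoped ENNReal NNReal

/-- Neyman–Pearson-type comparison (key step of Theorem 2): the level set
`C = {p ≥ k·q}` of the density ratio minimizes `Q` among all measurable sets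
with at least as much `P`-probability. -/
theorem density_ratio_level_set_minimizes
    {Ω : Type*} [MeasurableSpace Ω] (ν : Measure Ω) [SigmaFinite ν]
    (p q : Ω → ℝ≥0∞) (hp : Measurable p) (hq : Measurable q)
    (P Q : Measure Ω) [IsProbabilityMeasure P] [IsFiniteMeasure Q]
    (hP : P = ν.withDensity p) (hQ : Q = ν.withDensity q)
    (k : ℝ≥0) (hk : 0 < k) :
    ∀ D : Set Ω, MeasurableSet D →
      P {ω | (k : ℝ≥0∞) * q ω ≤ p ω} ≤ P D →
      Q {ω | (k : ℝ≥0∞) * q ω ≤ p ω} ≤ Q D := by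
  intro D hD hPD
  set C : Set Ω := {ω | (k : ℝ≥0∞) * q ω ≤ p ω} with hC
  have hCmeas : MeasurableSet C := measurableSet_le (hq.const_mul _) hp
  have hk0 : (k : ℝ≥0∞) ≠ 0 := by exact_mod_cast hk.ne'
  have hktop : (k : ℝ≥0∞) ≠ ⊤ := ENNReal.coe_ne_top
  -- measures of sets via densities
  have hPset : ∀ s : Set Ω, MeasurableSet s → P s = ∫⁻ ω in s, p ω ∂ν := by
    intro s hs; rw [hP, withDensity_apply _ hs]
  have hQset : ∀ s : Set Ω, MeasurableSet s →
      (k : ℝ≥0∞) * Q s = ∫⁻ ω in s, (k : ℝ≥0∞) * q ω ∂ν := by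
    intro s hs
    rw [hQ, withDensity_apply _ hs, lintegral_const_mul _ hq]
  -- key inequality 1: k * Q (C \ D) ≤ P (C \ D)
  have h1 : (k : ℝ≥0∞) * Q (C \ D) ≤ P (C \ D) := by
    rw [hQset _ (hCmeas.diff hD), hPset _ (hCmeas.diff hD)]
    refine setLIntegral_mono hp fun ω hω => hω.1
  -- key inequality 2: P (D \ C) ≤ k * Q (D \ C)
  have h2 : P (D \ C) ≤ (k : ℝ≥0∞) * Q (D \ C) := by
    rw [hQset _ (hD.diff hCmeas), hPset _ (hD.diff hCmeas)]
    refine setLIntegral_mono (hq.const_mul _) fun ω hω => le_of_lt ?_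
    exact lt_of_not_ge hω.2
  -- P (C \ D) ≤ P (D \ C)
  have hP1 : P (C ∩ D) + P (C \ D) = P C := measure_inter_add_diff C hD
  have hP2 : P (D ∩ C) + P (D \ C) = P D := measure_inter_add_diff D hCmeas
  have hPdiff : P (C \ D) ≤ P (D \ C) := by
    have h := hPD
    rw [← hP1, ← hP2, Set.inter_comm D C] at h
    exact (ENNReal.add_le_add_iff_left (measure_ne_top P (C ∩ D))).mp h
  -- conclude: k * Q C ≤ k * Q D
  have hQ1 : Q (C ∩ D) + Q (C \ D) = Q C := measure_inter_add_diff C hD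
  have hQ2 : Q (D ∩ C) + Q (D \ C) = Q D := measure_inter_add_diff D hCmeas
  have hmain : (k : ℝ≥0∞) * Q C ≤ (k : ℝ≥0∞) * Q D := by
    calc (k : ℝ≥0∞) * Q C = k * Q (C ∩ D) + k * Q (C \ D) := by
          rw [← mul_add, hQ1]
      _ ≤ k * Q (C ∩ D) + P (C \ D) := add_le_add le_rfl h1
      _ ≤ k * Q (C ∩ D) + P (D \ C) := add_le_add le_rfl hPdiff
      _ ≤ k * Q (C ∩ D) + k * Q (D \ C) := add_le_add le_rfl h2
      _ = (k : ℝ≥0∞) * Q D := by rw [← mul_add, Set.inter_comm C D, hQ2]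
  exact (ENNReal.mul_le_mul_iff_right hk0 hktop).mp hmain
end

section
/- Let ν be a σ-finite measure on a measurable space Ω, let P be a probability measure and Q a finite measure on Ω, both absolutely continuous with respect to ν with densities p and q respectively, and suppose q(ω) > 0 for all ω. Let r = p/q, fix γ ∈ [0,1], let D_γ = {ω₀ : P({ω : r(ω) > r(ω₀)}) ≤ γ}, and assume k_γ = inf{k ≥ 0 : P(r > k) ≤ γ} > 0. Then (i) D_γ minimizes Q(D) among all measurable D with P(D) ≥ P(D_γ); and (ii) if in addition the distribution of r under P has no atoms, then D_γ minimizes Q(D) among all measurable D with P(D) ≥ γ. -/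
open MeasureTheory
open scoped ENNReal NNReal

/-- Theorem 2: with `r = p/q`, `D_γ = {ω₀ : P(r > r ω₀) ≤ γ}` and
`k_γ = inf {k : P(r > k) ≤ γ} > 0`, (i) `D_γ` minimizes `Q(D)` among
measurable `D` with `P(D) ≥ P(D_γ)`, and (ii) if the distribution of `r`
under `P` has no atoms, `D_γ` minimizes `Q(D)` among measurable `D` with
`P(D) ≥ γ`. -/
theorem surprise_region_minimizes_Q
    {Ω : Type*} [MeasurableSpace Ω] (ν : Measure Ω) [SigmaFinite ν]
    (p q : Ω → ℝ≥0∞) (hp : Measurable p) (hq : Measurable q)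
    (hqpos : ∀ ω, 0 < q ω)
    (P Q : Measure Ω) [IsProbabilityMeasure P] [IsFiniteMeasure Q]
    (hP : P = ν.withDensity p) (hQ : Q = ν.withDensity q)
    (r : Ω → ℝ≥0∞) (hr : r = fun ω => p ω / q ω)
    (γ : ℝ≥0∞) (hγ : γ ≤ 1)
    (hk : 0 < sInf {k : ℝ≥0∞ | P {ω | r ω > k} ≤ γ}) :
    (∀ D : Set Ω, MeasurableSet D →
        P {ω₀ | P {ω | r ω > r ω₀} ≤ γ} ≤ P D →
        Q {ω₀ | P {ω | r ω > r ω₀} ≤ γ} ≤ Q D) ∧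
    ((∀ c : ℝ≥0∞, P {ω | r ω = c} = 0) →
      ∀ D : Set Ω, MeasurableSet D → γ ≤ P D →
        Q {ω₀ | P {ω | r ω > r ω₀} ≤ γ} ≤ Q D) := by
  set S : Set ℝ≥0∞ := {k | P {ω | r ω > k} ≤ γ} with hS
  set k : ℝ≥0∞ := sInf S with hkdef
  -- ∞ ∈ S
  have hStop : (⊤ : ℝ≥0∞) ∈ S := by
    have : {ω | r ω > (⊤ : ℝ≥0∞)} = ∅ := by
      ext ω; simp [not_top_lt]
    simp only [hS, Set.mem_setOf_eq, this, measure_empty]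
    exact zero_le
  -- k ∈ S (right continuity)
  have hkS : P {ω | r ω > k} ≤ γ := by
    obtain ⟨u, hu_anti, hu_tend, hu_mem⟩ :=
      exists_seq_tendsto_sInf ⟨⊤, hStop⟩ (OrderBot.bddBelow S)
    have hunion : {ω | r ω > k} = ⋃ n, {ω | r ω > u n} := by
      ext ω
      simp only [Set.mem_setOf_eq, Set.mem_iUnion]
      constructor
      · intro h
        exact (hu_tend.eventually_lt_const h).exists
      · rintro ⟨n, hn⟩
        exact lt_of_le_of_lt (sInf_le (hu_mem n)) hn
    have hmono : Monotone fun n => {ω | r ω > u n} := by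
      intro m n hmn ω hω
      exact lt_of_le_of_lt (hu_anti hmn) hω
    calc P {ω | r ω > k} = ⨆ n, P {ω | r ω > u n} := by
          rw [hunion]; exact hmono.directed_le.measure_iUnion
      _ ≤ γ := iSup_le fun n => hu_mem n
  have hr_meas : Measurable r := by rw [hr]; exact hp.div hq
  -- D_γ = {ω | k ≤ r ω}
  have hDset : {ω₀ | P {ω | r ω > r ω₀} ≤ γ} = {ω | k ≤ r ω} := by
    ext ω₀
    simp only [Set.mem_setOf_eq]
    constructor
    · intro h; exact sInf_le h
    · intro h
      calc P {ω | r ω > r ω₀} ≤ P {ω | r ω > k} := by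
            apply measure_mono; intro ω hω
            exact lt_of_le_of_lt h hω
        _ ≤ γ := hkS
  have hDγ_meas : MeasurableSet {ω | k ≤ r ω} := hr_meas measurableSet_Ici
  -- pointwise bounds
  have hpoint1 : ∀ ω, k ≤ r ω → k * q ω ≤ p ω := by
    intro ω hω
    have hq0 : q ω ≠ 0 := (hqpos ω).ne'
    have hqtop : q ω ≠ ⊤ := by
      intro htop
      have hr0 : r ω = 0 := by rw [hr]; simp [htop]
      rw [hr0] at hω
      exact hk.ne' (le_zero_iff.mp hω)
    rw [hr] at hω
    exact (ENNReal.le_div_iff_mul_le (Or.inl hq0) (Or.inl hqtop)).mp hω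
  have hpoint2 : ∀ ω, r ω < k → p ω ≤ k * q ω := by
    intro ω hω
    by_cases hqtop : q ω = ⊤
    · rw [hqtop, ENNReal.mul_top hk.ne']
      exact le_top
    · have hq0 : q ω ≠ 0 := (hqpos ω).ne'
      have hpq : p ω = r ω * q ω := by
        rw [hr]; exact (ENNReal.div_mul_cancel hq0 hqtop).symm
      rw [hpq]
      exact mul_le_mul_left hω.le _
  -- integral bounds
  have hint1 : ∀ A : Set Ω, MeasurableSet A → A ⊆ {ω | k ≤ r ω} → k * Q A ≤ P A := by
    intro A hA hsub
    rw [hP, hQ, withDensity_apply _ hA, withDensity_apply _ hA, ← lintegral_const_mul k hq]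
    exact setLIntegral_mono hp (fun ω hω => hpoint1 ω (hsub hω))
  have hint2 : ∀ A : Set Ω, MeasurableSet A → A ⊆ {ω | r ω < k} → P A ≤ k * Q A := by
    intro A hA hsub
    rw [hP, hQ, withDensity_apply _ hA, withDensity_apply _ hA, ← lintegral_const_mul k hq]
    exact setLIntegral_mono (hq.const_mul k) (fun ω hω => hpoint2 ω (hsub hω))
  -- core Neyman–Pearson argument
  have core : ∀ D : Set Ω, MeasurableSet D → P {ω | k ≤ r ω} ≤ P D →
      Q {ω | k ≤ r ω} ≤ Q D := by
    intro D hD hPD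
    set Dγ := {ω | k ≤ r ω} with hDγ
    have hA : MeasurableSet (Dγ \ D) := hDγ_meas.diff hD
    have hB : MeasurableSet (D \ Dγ) := hD.diff hDγ_meas
    have hPA : P (Dγ \ D) ≤ P (D \ Dγ) := by
      have h1 : P (Dγ ∩ D) + P (Dγ \ D) = P Dγ := measure_inter_add_diff Dγ hD
      have h2 : P (D ∩ Dγ) + P (D \ Dγ) = P D := measure_inter_add_diff D hDγ_meas
      have h3 : P (D ∩ Dγ) = P (Dγ ∩ D) := by rw [Set.inter_comm]
      rw [← h1, ← h2, h3] at hPD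
      exact (ENNReal.add_le_add_iff_left (measure_ne_top P _)).mp hPD
    have e1 : k * Q (Dγ \ D) ≤ P (Dγ \ D) := hint1 _ hA Set.diff_subset
    have e2 : P (D \ Dγ) ≤ k * Q (D \ Dγ) := by
      apply hint2 _ hB
      intro ω hω
      exact not_le.mp (show ¬ k ≤ r ω from hω.2)
    have hQA : Q (Dγ \ D) ≤ Q (D \ Dγ) := by
      have hchain : k * Q (Dγ \ D) ≤ k * Q (D \ Dγ) := e1.trans (hPA.trans e2)
      by_cases hktop : k = ⊤
      · have hQ0 : Q (Dγ \ D) = 0 := by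
          by_contra h
          rw [hktop, ENNReal.top_mul h] at e1
          exact (measure_ne_top P _) (top_le_iff.mp e1)
        rw [hQ0]; exact zero_le
      · exact (ENNReal.mul_le_mul_iff_right hk.ne' hktop).mp hchain
    calc Q Dγ = Q (Dγ ∩ D) + Q (Dγ \ D) := (measure_inter_add_diff Dγ hD).symm
      _ ≤ Q (Dγ ∩ D) + Q (D \ Dγ) := add_le_add_right hQA _
      _ = Q (D ∩ Dγ) + Q (D \ Dγ) := by rw [Set.inter_comm]
      _ = Q D := measure_inter_add_diff D hDγ_meas
  rw [hDset]
  refine ⟨core, ?_⟩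
  intro hna D hD hγD
  apply core D hD
  have hle : P {ω | k ≤ r ω} ≤ γ := by
    have hsub : {ω | k ≤ r ω} ⊆ {ω | r ω > k} ∪ {ω | r ω = k} := by
      intro ω hω
      rcases lt_or_eq_of_le (show k ≤ r ω from hω) with h | h
      · exact Or.inl h
      · exact Or.inr h.symm
    calc P {ω | k ≤ r ω} ≤ P ({ω | r ω > k} ∪ {ω | r ω = k}) := measure_mono hsub
      _ ≤ P {ω | r ω > k} + P {ω | r ω = k} := measure_union_le _ _
      _ ≤ γ + 0 := add_le_add hkS (le_of_eq (hna k))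
      _ = γ := add_zero γ
  exact hle.trans hγD
end

section
/- Let ν be a σ-finite measure on a measurable space Ω, let P be a probability measure and Q a finite measure on Ω, both absolutely continuous with respect to ν with densities p and q respectively, and suppose q(ω) > 0 for all ω. Let r = p/q, fix γ ∈ [0,1], let D_γ = {ω₀ : P({ω : r(ω) > r(ω₀)}) ≤ γ}, and assume k_γ = inf{k ≥ 0 : P(r > k) ≤ γ} > 0. Then the complement D_γᶜ maximizes Q(R) among all measurable R ⊆ Ω with P(R) ≤ P(D_γᶜ). -/
open MeasureTheory
open scoped ENNReal NNReal

/-- Rejection-region optimality (end of Section 2): the complement of the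
surprise region `D_γ` maximizes `Q(R)` among all measurable `R` with
`P(R) ≤ P(D_γᶜ)`. -/
theorem surprise_region_complement_maximizes_Q
    {Ω : Type*} [MeasurableSpace Ω] (ν : Measure Ω) [SigmaFinite ν]
    (p q : Ω → ℝ≥0∞) (hp : Measurable p) (hq : Measurable q)
    (hqpos : ∀ ω, 0 < q ω)
    (P Q : Measure Ω) [IsProbabilityMeasure P] [IsFiniteMeasure Q]
    (hP : P = ν.withDensity p) (hQ : Q = ν.withDensity q)
    (r : Ω → ℝ≥0∞) (hr : r = fun ω => p ω / q ω)
    (γ : ℝ≥0∞) (hγ : γ ≤ 1)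
    (hk : 0 < sInf {k : ℝ≥0∞ | P {ω | r ω > k} ≤ γ}) :
    ∀ R : Set Ω, MeasurableSet R →
      P R ≤ P ({ω₀ | P {ω | r ω > r ω₀} ≤ γ}ᶜ) →
      Q R ≤ Q ({ω₀ | P {ω | r ω > r ω₀} ≤ γ}ᶜ) := by
  intro R hR hPR
  set S : Set ℝ≥0∞ := {k : ℝ≥0∞ | P {ω | r ω > k} ≤ γ} with hS
  set k : ℝ≥0∞ := sInf S with hkdef
  set D : Set Ω := {ω₀ | P {ω | r ω > r ω₀} ≤ γ} with hD
  have hrmeas : Measurable r := by rw [hr]; exact hp.div hq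
  -- S is upward closed
  have hup : ∀ a ∈ S, ∀ b, a ≤ b → b ∈ S := by
    intro a ha b hab
    refine le_trans (measure_mono ?_) ha
    intro ω hω
    exact lt_of_le_of_lt hab hω
  have hSgt : ∀ s, k < s → s ∈ S := by
    intro s hs
    obtain ⟨a, haS, has⟩ := sInf_lt_iff.mp hs
    exact hup a haS s has.le
  have hSge : ∀ s ∈ S, k ≤ s := fun s hs => sInf_le hs
  have hDmem : ∀ ω, ω ∈ D ↔ r ω ∈ S := fun ω => Iff.rfl
  -- measurability of D
  have hDm : MeasurableSet D := by
    by_cases hkS : k ∈ S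
    · have : D = r ⁻¹' Set.Ici k := by
        ext ω
        simp only [Set.mem_preimage, Set.mem_Ici, hDmem]
        constructor
        · exact fun h => hSge _ h
        · intro h
          rcases eq_or_lt_of_le h with h' | h'
          · rwa [← h']
          · exact hSgt _ h'
      rw [this]; exact hrmeas measurableSet_Ici
    · have : D = r ⁻¹' Set.Ioi k := by
        ext ω
        simp only [Set.mem_preimage, Set.mem_Ioi, hDmem]
        constructor
        · intro h
          rcases eq_or_lt_of_le (hSge _ h) with h' | h'
          · exact absurd (h' ▸ h) hkS
          · exact h'
        · exact fun h => hSgt _ h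
      rw [this]; exact hrmeas measurableSet_Ioi
  -- on Dᶜ : p ≤ k * q
  have hle : ∀ ω ∉ D, p ω ≤ k * q ω := by
    intro ω hω
    have hr' : r ω ≤ k := by
      by_contra h
      exact hω (hSgt _ (lt_of_not_ge h))
    rcases eq_or_ne (q ω) ∞ with hqtop | hqtop
    · rw [hqtop, ENNReal.mul_top hk.ne']; exact le_top
    · rw [hr] at hr'
      exact (ENNReal.div_le_iff (hqpos ω).ne' hqtop).mp hr'
  -- on D : k * q ≤ p
  have hge : ∀ ω ∈ D, k * q ω ≤ p ω := by
    intro ω hω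
    have hr' : k ≤ r ω := hSge _ hω
    rcases eq_or_ne (q ω) ∞ with hqtop | hqtop
    · exfalso
      rw [hr] at hr'
      simp [hqtop] at hr'
      exact hk.ne' hr'
    · rw [hr] at hr'
      rw [ENNReal.le_div_iff_mul_le (Or.inl (hqpos ω).ne') (Or.inl hqtop)] at hr'
      exact hr'
  -- measure computations
  have hPs : ∀ A : Set Ω, MeasurableSet A → P A = ∫⁻ ω in A, p ω ∂ν := by
    intro A hA; rw [hP, withDensity_apply _ hA]
  have hQs : ∀ A : Set Ω, MeasurableSet A → Q A = ∫⁻ ω in A, q ω ∂ν := by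
    intro A hA; rw [hQ, withDensity_apply _ hA]
  rcases eq_or_ne k ∞ with hktop | hktop
  · -- k = ∞ : D ⊆ {p = ∞}, ν D = 0, so Q D = 0
    have hpD : ∀ ω ∈ D, p ω = ∞ := by
      intro ω hω
      have := hge ω hω
      rw [hktop, ENNReal.top_mul (hqpos ω).ne'] at this
      exact top_le_iff.mp this
    have hνD : ν D = 0 := by
      by_contra h
      have hPD : P D = ∞ := by
        rw [hPs D hDm]
        have : ∫⁻ ω in D, p ω ∂ν ≥ ∫⁻ _ in D, ∞ ∂ν := by
          refine setLIntegral_mono' hDm ?_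
          intro ω hω; rw [hpD ω hω]
        rw [setLIntegral_const] at this
        simpa [ENNReal.top_mul h] using this
      have := prob_le_one (μ := P) (s := D)
      rw [hPD] at this
      exact absurd this (by simp)
    have hQD : Q D = 0 := by
      rw [hQs D hDm]
      exact setLIntegral_measure_zero _ _ hνD
    calc Q R = Q (R ∩ D) + Q (R \ D) := (measure_inter_add_diff R hDm).symm
      _ ≤ 0 + Q Dᶜ := by
          refine add_le_add ?_ (measure_mono (Set.diff_subset_iff.mpr (by simp)))
          calc Q (R ∩ D) ≤ Q D := measure_mono Set.inter_subset_right
            _ = 0 := hQD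
      _ = Q Dᶜ := by rw [zero_add]
  · -- k finite and positive: Neyman-Pearson
    have h1 : k * Q (R ∩ D) ≤ P (R ∩ D) := by
      rw [hQs _ (hR.inter hDm), hPs _ (hR.inter hDm), ← lintegral_const_mul k hq]
      refine setLIntegral_mono' (hR.inter hDm) ?_
      intro ω hω; exact hge ω hω.2
    have h2 : P (Dᶜ \ R) ≤ k * Q (Dᶜ \ R) := by
      rw [hQs _ (hDm.compl.diff hR), hPs _ (hDm.compl.diff hR), ← lintegral_const_mul k hq]
      refine setLIntegral_mono' (hDm.compl.diff hR) ?_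
      intro ω hω; exact hle ω hω.1
    have h3 : P (R ∩ D) ≤ P (Dᶜ \ R) := by
      have e1 : P (R ∩ D) + P (R \ D) = P R := measure_inter_add_diff R hDm
      have e2 : P (Dᶜ ∩ R) + P (Dᶜ \ R) = P Dᶜ := measure_inter_add_diff Dᶜ hR
      have e3 : R \ D = Dᶜ ∩ R := by ext ω; simp [Set.mem_diff]; tauto
      have hfin : P (Dᶜ ∩ R) ≠ ∞ := (measure_lt_top P _).ne
      have : P (R ∩ D) + P (Dᶜ ∩ R) ≤ P (Dᶜ \ R) + P (Dᶜ ∩ R) := by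
        calc P (R ∩ D) + P (Dᶜ ∩ R) = P R := by rw [← e1, e3]
          _ ≤ P Dᶜ := hPR
          _ = P (Dᶜ \ R) + P (Dᶜ ∩ R) := by rw [← e2, add_comm]
      exact (ENNReal.add_le_add_iff_right hfin).mp this
    have h4 : k * Q (R ∩ D) ≤ k * Q (Dᶜ \ R) := h1.trans (h3.trans h2)
    have h5 : Q (R ∩ D) ≤ Q (Dᶜ \ R) :=
      (ENNReal.mul_le_mul_iff_right hk.ne' hktop).mp h4
    have e3 : R \ D = Dᶜ ∩ R := by ext ω; simp [Set.mem_diff]; tauto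
    calc Q R = Q (R ∩ D) + Q (R \ D) := (measure_inter_add_diff R hDm).symm
      _ ≤ Q (Dᶜ \ R) + Q (Dᶜ ∩ R) := by rw [e3]; exact add_le_add h5 le_rfl
      _ = Q Dᶜ := by rw [add_comm]; exact measure_inter_add_diff Dᶜ hR
end

section
/- Let Θ and 𝒳 be standard Borel spaces, μ a probability measure on Θ, κ a Markov kernel from Θ to 𝒳, ρ the joint distribution of (x,θ) when θ ∼ μ and x ∼ κ(θ), M the marginal of ρ on 𝒳, and x ↦ Π(·|x) a disintegration (posterior kernel) of ρ given x. Let Υ : Θ → 𝒯 be measurable, let ν_𝒯 be a σ-finite measure on 𝒯, let Λ be a probability measure on 𝒯 with everywhere positive density λ with respect to ν_𝒯, and for each x let π(·|x) be a density of the marginal posterior Π_Υ(·|x) = Π(·|x) ∘ Υ⁻¹ with respect to ν_𝒯. Fix γ ∈ [0,1] and define B_{Λ,γ}(x) = {τ₀ : Π_Υ({τ : π(τ|x)/λ(τ) > π(τ₀|x)/λ(τ₀)} | x) ≤ γ}, assuming for each x that k_γ(x) = inf{k ≥ 0 : Π_Υ(π(·|x)/λ(·) > k | x) ≤ γ} >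 0. Then for every measurable family of regions x ↦ B(x) ⊆ 𝒯 with Π_Υ(B(x)|x) ≥ Π_Υ(B_{Λ,γ}(x)|x) for all x, the prior probability of covering a false value satisfies ∫_Θ ∫_𝒯 κ(θ)({x : τ ∈ B(x)}) Λ(dτ) μ(dθ) ≥ ∫_Θ ∫_𝒯 κ(θ)({x : τ ∈ B_{Λ,γ}(x)}) Λ(dτ) μ(dθ). -/
open MeasureTheory ProbabilityTheory
open scoped ENNReal NNReal

/-- Neyman–Pearson type lemma: the "density-ratio ≥ k" region minimizes the
`ν.withDensity l`-content among sets with at least as much `P`-content. -/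
lemma np_aux_lemma {𝒯 : Type*} [MeasurableSpace 𝒯] (ν : Measure 𝒯) (l p : 𝒯 → ℝ≥0∞)
    (hl : Measurable l) (hl0 : ∀ τ, l τ ≠ 0) (hp : Measurable p)
    (P : Measure 𝒯) (hP : P = ν.withDensity p) (hPfin : P Set.univ ≠ ∞)
    (k : ℝ≥0∞) (hk : k ≠ 0)
    (B : Set 𝒯) (hBm : MeasurableSet B)
    (hcon : P {τ | k ≤ p τ / l τ} ≤ P B) :
    ν.withDensity l {τ | k ≤ p τ / l τ} ≤ ν.withDensity l B := by
  set B₀ : Set 𝒯 := {τ | k ≤ p τ / l τ} with hB₀def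
  have hB₀m : MeasurableSet B₀ := measurableSet_le measurable_const (hp.div hl)
  have key1 : ∀ τ ∈ B₀, k * l τ ≤ p τ := by
    intro τ hτ
    have hτ' : k ≤ p τ / l τ := hτ
    by_cases hlt : l τ = ∞
    · exfalso
      rw [hlt, ENNReal.div_top] at hτ'
      exact hk (le_antisymm hτ' zero_le)
    · exact (ENNReal.le_div_iff_mul_le (Or.inl (hl0 τ)) (Or.inl hlt)).mp hτ'
  have key2 : ∀ τ ∉ B₀, p τ ≤ k * l τ := by
    intro τ hτ
    by_cases hlt : l τ = ∞
    · rw [hlt, ENNReal.mul_top hk]; exact le_top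
    · have h1 : p τ / l τ < k := lt_of_not_ge hτ
      exact ((ENNReal.div_lt_iff (Or.inl (hl0 τ)) (Or.inl hlt)).mp h1).le
  have hPs : ∀ s : Set 𝒯, P s ≠ ∞ := fun s =>
    ((measure_mono (Set.subset_univ s)).trans_lt (lt_top_iff_ne_top.mpr hPfin)).ne
  have h1 : k * ν.withDensity l (B₀ \ B) ≤ P (B₀ \ B) := by
    rw [withDensity_apply _ (hB₀m.diff hBm), hP, withDensity_apply _ (hB₀m.diff hBm),
      ← lintegral_const_mul k hl]
    exact setLIntegral_mono' (hB₀m.diff hBm) fun τ hτ => key1 τ hτ.1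
  have h2 : P (B₀ \ B) ≤ P (B \ B₀) := by
    have e1 : P (B₀ ∩ B) + P (B₀ \ B) = P B₀ := measure_inter_add_diff B₀ hBm
    have e2 : P (B ∩ B₀) + P (B \ B₀) = P B := measure_inter_add_diff B hB₀m
    have hc : P (B₀ ∩ B) + P (B₀ \ B) ≤ P (B₀ ∩ B) + P (B \ B₀) := by
      rw [e1]
      calc P B₀ ≤ P B := hcon
        _ = P (B₀ ∩ B) + P (B \ B₀) := by rw [← e2, Set.inter_comm]
    exact (ENNReal.add_le_add_iff_left (hPs _)).mp hc
  have h3 : P (B \ B₀) ≤ k * ν.withDensity l (B \ B₀) := by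
    rw [withDensity_apply _ (hBm.diff hB₀m), hP, withDensity_apply _ (hBm.diff hB₀m),
      ← lintegral_const_mul k hl]
    exact setLIntegral_mono' (hBm.diff hB₀m) fun τ hτ => key2 τ hτ.2
  have h4 : ν.withDensity l (B₀ \ B) ≤ ν.withDensity l (B \ B₀) := by
    by_cases hkt : k = ∞
    · have hfin : k * ν.withDensity l (B₀ \ B) ≠ ∞ := (h1.trans_lt (lt_top_iff_ne_top.mpr (hPs _))).ne
      have hz : ν.withDensity l (B₀ \ B) = 0 := by
        by_contra h
        exact hfin (by rw [hkt, ENNReal.top_mul h])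
      rw [hz]; exact zero_le
    · exact (ENNReal.mul_le_mul_iff_right hk hkt).mp (h1.trans (h2.trans h3))
  calc ν.withDensity l B₀
      = ν.withDensity l (B₀ ∩ B) + ν.withDensity l (B₀ \ B) :=
        (measure_inter_add_diff B₀ hBm).symm
    _ ≤ ν.withDensity l (B ∩ B₀) + ν.withDensity l (B \ B₀) :=
        add_le_add (le_of_eq (by rw [Set.inter_comm])) h4
    _ = ν.withDensity l B := measure_inter_add_diff B hB₀m

/-- Characterization of the hpd-like region via the infimum `k₀`. -/
lemma char_aux_lemma {𝒯 : Type*} [MeasurableSpace 𝒯] (Q : Measure 𝒯)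
    (r : 𝒯 → ℝ≥0∞) (γ : ℝ≥0∞) (c : ℝ≥0∞) :
    Q {τ | r τ > c} ≤ γ ↔ sInf {k : ℝ≥0∞ | Q {τ | r τ > k} ≤ γ} ≤ c := by
  set S := {k : ℝ≥0∞ | Q {τ | r τ > k} ≤ γ} with hS
  constructor
  · exact fun h => sInf_le h
  · intro h
    have hmono : Q {τ | r τ > c} ≤ Q {τ | r τ > sInf S} :=
      measure_mono fun τ (hτ : c < r τ) => lt_of_le_of_lt h hτ
    refine hmono.trans ?_
    have hne : S.Nonempty := ⟨∞, by
      have : {τ | r τ > (∞ : ℝ≥0∞)} = ∅ := by ext τ; simp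
      simp [hS, this]⟩
    obtain ⟨u, hu_anti, hu_tend, hu_mem⟩ := exists_seq_tendsto_sInf hne (OrderBot.bddBelow S)
    have hU : {τ | r τ > sInf S} = ⋃ n, {τ | r τ > u n} := by
      ext τ
      simp only [Set.mem_setOf_eq, Set.mem_iUnion]
      constructor
      · intro hτ; exact (hu_tend.eventually_lt_const hτ).exists
      · rintro ⟨n, hn⟩; exact lt_of_le_of_lt (sInf_le (hu_mem n)) hn
    have hdir : Directed (· ⊆ ·) (fun n => {τ | r τ > u n}) := by
      have hmon : Monotone (fun n => {τ | r τ > u n}) := fun m n hmn τ hτ =>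
        lt_of_le_of_lt (hu_anti hmn) hτ
      exact hmon.directed_le
    rw [hU, hdir.measure_iUnion]
    exact iSup_le fun n => hu_mem n

/-- Fubini computation for the prior probability of covering a false value. -/
lemma fubini_aux_lemma {Θ 𝒳 𝒯 : Type*} [MeasurableSpace Θ] [MeasurableSpace 𝒳]
    [MeasurableSpace 𝒯]
    (μ : Measure Θ) [SFinite μ] (κ : Kernel Θ 𝒳) [IsSFiniteKernel κ]
    (Λ : Measure 𝒯) [SFinite Λ]
    (C : Set (𝒳 × 𝒯)) (hC : MeasurableSet C) :
    ∫⁻ θ, ∫⁻ τ, κ θ {x | (x, τ) ∈ C} ∂Λ ∂μ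
      = ∫⁻ x, Λ (Prod.mk x ⁻¹' C) ∂((μ.compProd κ).map Prod.snd) := by
  have h1 : ∀ θ, ∫⁻ τ, κ θ {x | (x, τ) ∈ C} ∂Λ = ∫⁻ x, Λ (Prod.mk x ⁻¹' C) ∂(κ θ) :=
    fun θ => (Measure.prod_apply_symm (μ := κ θ) (ν := Λ) hC).symm.trans
      (Measure.prod_apply hC)
  simp_rw [h1]
  rw [lintegral_map (measurable_measure_prodMk_left hC) measurable_snd,
    Measure.lintegral_compProd (f := fun a : Θ × 𝒳 => Λ (Prod.mk a.2 ⁻¹' C))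
      ((measurable_measure_prodMk_left hC).comp measurable_snd)]

/-- Theorem 3: the hpd-like region `B_{Λ,γ}(x)` built from the ratio of the
marginal posterior density to the density `λ` of `Λ` minimizes the prior
probability of covering a false value `τ ∼ Λ`, among all families of regions
with at least as much posterior content. -/
theorem hpd_like_region_minimizes_false_coverage
    {Θ 𝒳 𝒯 : Type*} [MeasurableSpace Θ] [StandardBorelSpace Θ]
    [MeasurableSpace 𝒳] [StandardBorelSpace 𝒳] [MeasurableSpace 𝒯]
    (μ : Measure Θ) [IsProbabilityMeasure μ]
    (κ : Kernel Θ 𝒳) [IsMarkovKernel κ]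
    (ρ : Measure (𝒳 × Θ)) (hρ : ρ = (μ.compProd κ).map Prod.swap)
    (M : Measure 𝒳) (hM : M = ρ.fst)
    (post : Kernel 𝒳 Θ) [IsMarkovKernel post] (hpost : ρ = M.compProd post)
    (Υ : Θ → 𝒯) (hΥ : Measurable Υ)
    (ν𝒯 : Measure 𝒯) [SigmaFinite ν𝒯]
    (Λ : Measure 𝒯) [IsProbabilityMeasure Λ]
    (l : 𝒯 → ℝ≥0∞) (hl : Measurable l) (hlpos : ∀ τ, 0 < l τ)
    (hΛ : Λ = ν𝒯.withDensity l)
    (pd : 𝒳 → 𝒯 → ℝ≥0∞) (hpd : Measurable (fun p : 𝒳 × 𝒯 => pd p.1 p.2))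
    (hdens : ∀ x, (post x).map Υ = ν𝒯.withDensity (pd x))
    (γ : ℝ≥0∞) (hγ : γ ≤ 1)
    (hk : ∀ x, 0 < sInf {k : ℝ≥0∞ | post x (Υ ⁻¹' {τ | pd x τ / l τ > k}) ≤ γ})
    (B : 𝒳 → Set 𝒯) (hB : MeasurableSet {p : 𝒳 × 𝒯 | p.2 ∈ B p.1})
    (hcontent : ∀ x,
      post x (Υ ⁻¹'
        {τ₀ | post x (Υ ⁻¹' {τ | pd x τ / l τ > pd x τ₀ / l τ₀}) ≤ γ}) ≤
      post x (Υ ⁻¹' (B x))) :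
    ∫⁻ θ, ∫⁻ τ,
        κ θ {x | τ ∈
          {τ₀ | post x (Υ ⁻¹' {τ' | pd x τ' / l τ' > pd x τ₀ / l τ₀}) ≤ γ}}
      ∂Λ ∂μ ≤
    ∫⁻ θ, ∫⁻ τ, κ θ {x | τ ∈ B x} ∂Λ ∂μ := by
  classical
  -- The hpd-like region as a subset of the product space.
  set C₀ : Set (𝒳 × 𝒯) :=
    {p | post p.1 (Υ ⁻¹' {τ' | pd p.1 τ' / l τ' > pd p.1 p.2 / l p.2}) ≤ γ} with hC₀def
  -- Measurability of `C₀`.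
  have hSm : MeasurableSet {q : (𝒳 × 𝒯) × Θ |
      pd q.1.1 q.1.2 / l q.1.2 < pd q.1.1 (Υ q.2) / l (Υ q.2)} := by
    apply measurableSet_lt
    · exact (hpd.comp ((measurable_fst.comp measurable_fst).prodMk
        (measurable_snd.comp measurable_fst))).div (hl.comp (measurable_snd.comp measurable_fst))
    · exact (hpd.comp ((measurable_fst.comp measurable_fst).prodMk
        (hΥ.comp measurable_snd))).div ((hl.comp hΥ).comp measurable_snd)
  have hFm : Measurable fun p : 𝒳 × 𝒯 =>
      post p.1 (Υ ⁻¹' {τ' | pd p.1 τ' / l τ' > pd p.1 p.2 / l p.2}) := by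
    have := Kernel.measurable_kernel_prodMk_left
      (κ := post.comap Prod.fst measurable_fst) hSm
    simpa [Kernel.comap_apply, Set.preimage] using this
  have hC₀m : MeasurableSet C₀ := by
    rw [hC₀def]
    exact measurableSet_le hFm measurable_const
  -- pointwise comparison of the Λ-contents of the slices
  have pointwise : ∀ x, Λ (Prod.mk x ⁻¹' C₀) ≤
      Λ (Prod.mk x ⁻¹' {p : 𝒳 × 𝒯 | p.2 ∈ B p.1}) := by
    intro x
    have hBx : MeasurableSet (B x) := measurable_prodMk_left hB
    have hQ : ∀ A : Set 𝒯, MeasurableSet A → post x (Υ ⁻¹' A) = ((post x).map Υ) A :=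
      fun A hA => (Measure.map_apply hΥ hA).symm
    have hr : Measurable fun τ => pd x τ / l τ :=
      (hpd.comp measurable_prodMk_left).div hl
    set k₀ := sInf {k : ℝ≥0∞ | ((post x).map Υ) {τ | pd x τ / l τ > k} ≤ γ} with hk₀def
    have hk₀pos : 0 < k₀ := by
      have hSeq : {k : ℝ≥0∞ | post x (Υ ⁻¹' {τ | pd x τ / l τ > k}) ≤ γ}
          = {k : ℝ≥0∞ | ((post x).map Υ) {τ | pd x τ / l τ > k} ≤ γ} := by
        ext k
        rw [Set.mem_setOf_eq, Set.mem_setOf_eq, hQ _ (measurableSet_lt measurable_const hr)]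
      rw [hk₀def, ← hSeq]
      exact hk x
    have hchar : ∀ τ₀ : 𝒯,
        (post x (Υ ⁻¹' {τ' | pd x τ' / l τ' > pd x τ₀ / l τ₀}) ≤ γ)
          ↔ k₀ ≤ pd x τ₀ / l τ₀ := by
      intro τ₀
      rw [hQ _ (measurableSet_lt measurable_const hr)]
      exact char_aux_lemma ((post x).map Υ) (fun τ => pd x τ / l τ) γ (pd x τ₀ / l τ₀)
    have hslice : Prod.mk x ⁻¹' C₀ = {τ | k₀ ≤ pd x τ / l τ} := by
      ext τ₀
      exact hchar τ₀
    have hsetB₀ : {τ₀ | post x (Υ ⁻¹' {τ | pd x τ / l τ > pd x τ₀ / l τ₀}) ≤ γ}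
        = {τ | k₀ ≤ pd x τ / l τ} := Set.ext hchar
    have hQprob : IsProbabilityMeasure ((post x).map Υ) :=
      Measure.isProbabilityMeasure_map hΥ.aemeasurable
    have hcon : ((post x).map Υ) {τ | k₀ ≤ pd x τ / l τ} ≤ ((post x).map Υ) (B x) := by
      have h0 := hcontent x
      rw [hsetB₀, hQ _ (measurableSet_le measurable_const hr), hQ _ hBx] at h0
      exact h0
    have := np_aux_lemma ν𝒯 l (pd x) hl (fun τ => (hlpos τ).ne')
      (hpd.comp measurable_prodMk_left) ((post x).map Υ) (hdens x)
      (measure_ne_top _ _) k₀ hk₀pos.ne' (B x) hBx hcon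
    rw [hΛ, hslice]
    exact this
  -- Fubini on both sides and conclude
  have e1 := fubini_aux_lemma μ κ Λ C₀ hC₀m
  have e2 := fubini_aux_lemma μ κ Λ {p : 𝒳 × 𝒯 | p.2 ∈ B p.1} hB
  show ∫⁻ θ, ∫⁻ τ, κ θ {x | (x, τ) ∈ C₀} ∂Λ ∂μ
      ≤ ∫⁻ θ, ∫⁻ τ, κ θ {x | (x, τ) ∈ {p : 𝒳 × 𝒯 | p.2 ∈ B p.1}} ∂Λ ∂μ
  rw [e1, e2]
  exact lintegral_mono fun x => pointwise x
end

section
/- Let ν be a σ-finite measure on a measurable space Ω, let P and Q be probability measures on Ω absolutely continuous with respect to ν with densities p and q respectively. Let k > 0 and let C = {ω : p(ω) > k·q(ω)}; assume ν(C) > 0 and Q(C) < 1. Then (i) P(C)·(1 − Q(C)) > Q(C)·(1 − P(C)) (the Bayes factor in favor of C exceeds 1), and (ii) P(C) > Q(C) (the relative belief ratio of C exceeds 1). -/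
open MeasureTheory
open scoped ENNReal NNReal

/-- Lemma 6: for the density-ratio level set `C = {p > k·q}` with `k > 0`,
`ν(C) > 0` and `Q(C) < 1`, the Bayes factor in favor of `C` exceeds 1,
i.e. `P(C)(1 − Q(C)) > Q(C)(1 − P(C))`, and the relative belief ratio exceeds
1, i.e. `P(C) > Q(C)`. -/
theorem bayes_factor_and_relative_belief_gt_one
    {Ω : Type*} [MeasurableSpace Ω] (ν : Measure Ω) [SigmaFinite ν]
    (p q : Ω → ℝ≥0∞) (hp : Measurable p) (hq : Measurable q)
    (P Q : Measure Ω) [IsProbabilityMeasure P] [IsProbabilityMeasure Q]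
    (hP : P = ν.withDensity p) (hQ : Q = ν.withDensity q)
    (k : ℝ≥0) (hk : 0 < k)
    (C : Set Ω) (hC : C = {ω | (k : ℝ≥0∞) * q ω < p ω})
    (hνC : 0 < ν C) (hQC : Q C < 1) :
    Q C * (1 - P C) < P C * (1 - Q C) ∧ Q C < P C := by
  have hCm : MeasurableSet C := by
    rw [hC]; exact measurableSet_lt (hq.const_mul _) hp
  have hQle : Q C ≤ 1 := prob_le_one
  have hPle : P C ≤ 1 := prob_le_one
  have hQne : Q C ≠ ∞ := (lt_of_le_of_lt hQle ENNReal.one_lt_top).ne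
  have hPne : P C ≠ ∞ := (lt_of_le_of_lt hPle ENNReal.one_lt_top).ne
  have hkne : (k : ℝ≥0∞) ≠ ∞ := ENNReal.coe_ne_top
  -- P C = ∫_C p, Q C = ∫_C q
  have hPC : P C = ∫⁻ ω in C, p ω ∂ν := by rw [hP, withDensity_apply _ hCm]
  have hQC' : Q C = ∫⁻ ω in C, q ω ∂ν := by rw [hQ, withDensity_apply _ hCm]
  have hPCc : P Cᶜ = ∫⁻ ω in Cᶜ, p ω ∂ν := by rw [hP, withDensity_apply _ hCm.compl]
  have hQCc : Q Cᶜ = ∫⁻ ω in Cᶜ, q ω ∂ν := by rw [hQ, withDensity_apply _ hCm.compl]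
  -- strict inequality on C
  have hkq : ∫⁻ ω in C, (k : ℝ≥0∞) * q ω ∂ν = (k : ℝ≥0∞) * Q C := by
    rw [hQC', lintegral_const_mul _ hq]
  have h1 : (k : ℝ≥0∞) * Q C < P C := by
    rw [hPC, ← hkq]
    refine setLIntegral_strict_mono hCm hνC.ne' hp ?_ ?_
    · rw [hkq]
      exact (ENNReal.mul_lt_top ENNReal.coe_lt_top (lt_of_le_of_lt hQle ENNReal.one_lt_top)).ne
    · filter_upwards with ω hω
      rw [hC] at hω; exact hω
  -- inequality on Cᶜ
  have h2 : P Cᶜ ≤ (k : ℝ≥0∞) * Q Cᶜ := by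
    rw [hPCc, hQCc, ← lintegral_const_mul _ hq]
    refine setLIntegral_mono_ae ((hq.const_mul _).aemeasurable) ?_
    filter_upwards with ω hω
    rw [hC] at hω
    exact not_lt.mp hω
  have hPcompl : P Cᶜ = 1 - P C := prob_compl_eq_one_sub hCm
  have hQcompl : Q Cᶜ = 1 - Q C := prob_compl_eq_one_sub hCm
  have hQc_pos : (0 : ℝ≥0∞) < 1 - Q C := tsub_pos_of_lt hQC
  have hQc_ne_top : (1 : ℝ≥0∞) - Q C ≠ ∞ := by
    exact (lt_of_le_of_lt tsub_le_self ENNReal.one_lt_top).ne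
  have hmain : Q C * (1 - P C) < P C * (1 - Q C) := by
    calc Q C * (1 - P C) ≤ Q C * ((k : ℝ≥0∞) * (1 - Q C)) := by
          rw [← hPcompl, ← hQcompl]; exact mul_le_mul_right h2 _
      _ = ((k : ℝ≥0∞) * Q C) * (1 - Q C) := by ring
      _ < P C * (1 - Q C) := by
          rw [mul_comm _ (1 - Q C), mul_comm (P C)]; exact ENNReal.mul_lt_mul_right hQc_pos.ne' hQc_ne_top h1
  refine ⟨hmain, ?_⟩
  by_contra hle
  push_neg at hle
  exact absurd (mul_le_mul' hle (tsub_le_tsub_left hle 1)) (not_le.mpr hmain)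
end

section
/- Let ν be a σ-finite measure on a measurable space Ω, let P and Q be probability measures on Ω absolutely continuous with respect to ν with densities p and q respectively, with q(ω) > 0 for all ω. Fix γ ∈ [0,1], let D_γ = {ω₀ : P({ω : p(ω)/q(ω) > p(ω₀)/q(ω₀)}) ≤ γ}, and assume k_γ = inf{k ≥ 0 : P(p/q > k) ≤ γ} > 0. Then for every measurable C ⊆ Ω with P(C) = P(D_γ): (i) Q(D_γ) ≤ Q(C); (ii) if Q(D_γ) > 0 then P(D_γ)/Q(D_γ) ≥ P(C)/Q(C) (the relative belief ratio is maximal at D_γ); and (iii) if 0 < Q(D_γ), Q(C) < 1 and P(D_γ) < 1 then [P(D_γ)/(1−P(D_γ))]/[Q(D_γ)/(1−Q(D_γ))] ≥ [P(C)/(1−P(C))]/[Q(C)/(1−Q(C))] (the Bayes factor is maximal at D_γ). -/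
open MeasureTheory Filter
open scoped ENNReal NNReal Topology

/-- Theorem 7: the relative surprise region `D_γ` has minimal prior content,
maximal relative belief ratio and maximal Bayes factor among all measurable
sets with the same posterior content. -/
theorem surprise_region_maximizes_BF_and_RB
    {Ω : Type*} [MeasurableSpace Ω] (ν : Measure Ω) [SigmaFinite ν]
    (p q : Ω → ℝ≥0∞) (hp : Measurable p) (hq : Measurable q)
    (hqpos : ∀ ω, 0 < q ω)
    (P Q : Measure Ω) [IsProbabilityMeasure P] [IsProbabilityMeasure Q]
    (hP : P = ν.withDensity p) (hQ : Q = ν.withDensity q)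
    (r : Ω → ℝ≥0∞) (hr : r = fun ω => p ω / q ω)
    (γ : ℝ≥0∞) (hγ : γ ≤ 1)
    (D : Set Ω) (hD : D = {ω₀ | P {ω | r ω > r ω₀} ≤ γ})
    (hk : 0 < sInf {k : ℝ≥0∞ | P {ω | r ω > k} ≤ γ}) :
    ∀ C : Set Ω, MeasurableSet C → P C = P D →
      (Q D ≤ Q C) ∧
      (0 < Q D → P C / Q C ≤ P D / Q D) ∧
      (0 < Q D → 0 < Q C → Q D < 1 → Q C < 1 → P D < 1 →
        (P C / (1 - P C)) / (Q C / (1 - Q C)) ≤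
          (P D / (1 - P D)) / (Q D / (1 - Q D))) := by
  intro C hC hPC
  set k : ℝ≥0∞ := sInf {k : ℝ≥0∞ | P {ω | r ω > k} ≤ γ} with hkdef
  have hrm : Measurable r := by rw [hr]; exact hp.div hq
  have hStop : (⊤ : ℝ≥0∞) ∈ {k : ℝ≥0∞ | P {ω | r ω > k} ≤ γ} := by
    have h : {ω | r ω > (⊤ : ℝ≥0∞)} = ∅ := by
      ext ω; simp
    simp only [Set.mem_setOf_eq, h, measure_empty]
    exact zero_le
  -- k belongs to the set (right continuity)
  have hkS : P {ω | r ω > k} ≤ γ := by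
    obtain ⟨u, hu_anti, hu_tend, hu_mem⟩ :=
      exists_seq_tendsto_sInf ⟨⊤, hStop⟩ (OrderBot.bddBelow _)
    have hsub : {ω | r ω > k} ⊆ ⋃ n, {ω | r ω > u n} := by
      intro ω hω
      obtain ⟨n, hn⟩ := (hu_tend.eventually_lt_const hω).exists
      exact Set.mem_iUnion.2 ⟨n, hn⟩
    have hdir : Directed (· ⊆ ·) fun n => {ω | r ω > u n} := by
      refine Monotone.directed_le ?_
      intro m n hmn ω hω
      exact lt_of_le_of_lt (hu_anti hmn) hω
    calc P {ω | r ω > k} ≤ P (⋃ n, {ω | r ω > u n}) := measure_mono hsub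
      _ = ⨆ n, P {ω | r ω > u n} := hdir.measure_iUnion
      _ ≤ γ := iSup_le fun n => hu_mem n
  -- D is the upper level set of r at level k
  have hDk : D = {ω | k ≤ r ω} := by
    ext ω₀
    rw [hD]
    constructor
    · intro h
      exact sInf_le (show r ω₀ ∈ {k : ℝ≥0∞ | P {ω | r ω > k} ≤ γ} from h)
    · intro h
      have hle : k ≤ r ω₀ := h
      have : P {ω | r ω > r ω₀} ≤ P {ω | r ω > k} :=
        measure_mono fun ω hω => show k < r ω from lt_of_le_of_lt hle hω
      exact this.trans hkS
  have hDm : MeasurableSet D := by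
    rw [hDk]; exact measurableSet_le measurable_const hrm
  set A := D \ C with hAdef
  set B := C \ D with hBdef
  have hAm : MeasurableSet A := hDm.diff hC
  have hBm : MeasurableSet B := hC.diff hDm
  have hPAB : P A = P B := by
    have h1 : P (D ∩ C) + P A = P D := measure_inter_add_diff D hC
    have h2 : P (C ∩ D) + P B = P C := measure_inter_add_diff C hDm
    rw [Set.inter_comm C D] at h2
    have : P (D ∩ C) + P A = P (D ∩ C) + P B := by rw [h1, h2, hPC]
    exact (ENNReal.add_right_inj (measure_ne_top P _)).1 this
  have hPA : P A = ∫⁻ ω in A, p ω ∂ν := by rw [hP, withDensity_apply _ hAm]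
  have hPB : P B = ∫⁻ ω in B, p ω ∂ν := by rw [hP, withDensity_apply _ hBm]
  have hQA : Q A = ∫⁻ ω in A, q ω ∂ν := by rw [hQ, withDensity_apply _ hAm]
  have hQB : Q B = ∫⁻ ω in B, q ω ∂ν := by rw [hQ, withDensity_apply _ hBm]
  have hptA : ∀ ω ∈ A, k * q ω ≤ p ω := by
    intro ω hω
    have hkr : k ≤ r ω := by
      have := hω.1; rw [hDk] at this; exact this
    by_cases hqt : q ω = ∞
    · exfalso
      have hr0 : r ω = 0 := by rw [hr]; simp [hqt]
      rw [hr0] at hkr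
      exact hk.ne' (le_antisymm hkr zero_le)
    · rw [hr] at hkr
      exact (ENNReal.le_div_iff_mul_le (Or.inl (hqpos ω).ne') (Or.inl hqt)).1 hkr
  have hptB : ∀ ω ∈ B, p ω ≤ k * q ω := by
    intro ω hω
    have hkr : r ω < k := by
      have h2 := hω.2; rw [hDk] at h2; exact lt_of_not_ge h2
    by_cases hqt : q ω = ∞
    · rw [hqt, ENNReal.mul_top hk.ne']; exact le_top
    · rw [hr] at hkr
      exact le_of_lt ((ENNReal.div_lt_iff (Or.inl (hqpos ω).ne') (Or.inl hqt)).1 hkr)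
  have h1 : k * Q A ≤ P A := by
    rw [hPA, hQA, ← lintegral_const_mul k hq]
    exact setLIntegral_mono hp hptA
  have h2 : P B ≤ k * Q B := by
    rw [hPB, hQB, ← lintegral_const_mul k hq]
    exact setLIntegral_mono (hq.const_mul k) hptB
  have h3 : k * Q A ≤ k * Q B := h1.trans (hPAB ▸ h2)
  have key : Q A ≤ Q B := by
    by_cases hkt : k = ∞
    · have hQA0 : Q A = 0 := by
        by_contra h
        rw [hkt, ENNReal.top_mul h] at h1
        exact measure_ne_top P A (top_le_iff.1 h1)
      rw [hQA0]; exact zero_le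
    · exact (ENNReal.mul_le_mul_iff_right hk.ne' hkt).1 h3
  have hQDC : Q D ≤ Q C := by
    have hd : Q (D ∩ C) + Q A = Q D := measure_inter_add_diff D hC
    have hc : Q (C ∩ D) + Q B = Q C := measure_inter_add_diff C hDm
    rw [Set.inter_comm C D] at hc
    rw [← hd, ← hc]
    exact add_le_add le_rfl key
  refine ⟨hQDC, ?_, ?_⟩
  · intro _
    rw [hPC]
    exact ENNReal.div_le_div le_rfl hQDC
  · intro _ _ _ _ _
    rw [hPC]
    exact ENNReal.div_le_div le_rfl
      (ENNReal.div_le_div hQDC (tsub_le_tsub le_rfl hQDC))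
end

section
/- Let Θ and 𝒳 be standard Borel spaces, μ a probability measure on Θ, κ a Markov kernel from Θ to 𝒳, ρ the joint distribution of (x,θ) when θ ∼ μ and x ∼ κ(θ), M the marginal of ρ on 𝒳, and x ↦ Π(·|x) a disintegration (posterior kernel) of ρ given x. Let Υ : Θ → 𝒯 be measurable, let Π_Υ = μ ∘ Υ⁻¹ be the marginal prior, and let x ↦ C(x) ⊆ 𝒯 be a measurable family of sets such that Π({θ : Υ(θ) ∈ C(x)} | x) > Π_Υ(C(x)) for M-almost every x, with both x ↦ Π_Υ(C(x)) and x ↦ Π(Υ(θ) ∈ C(x)|x) M-integrable. Then ∫_𝒳 Π_Υ(C(x)) M(dx) < ∫_Θ κ(θ)({x : Υ(θ) ∈ C(x)}) μ(dθ); that is, the prior probability that the region covers an independent false value generated from the prior is strictly less than the prior probability that it covers the true value. -/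
open MeasureTheory ProbabilityTheory
open scoped ENNReal NNReal

/-- Theorem 9 (unbiasedness): if the posterior content of `C(x)` strictly
exceeds its prior content for `M`-almost every `x`, then the prior probability
of covering an independent false value from the prior is strictly less than
the prior probability of covering the true value `Υ(θ)`. -/
theorem surprise_region_unbiased
    {Θ 𝒳 𝒯 : Type*} [MeasurableSpace Θ] [StandardBorelSpace Θ]
    [MeasurableSpace 𝒳] [StandardBorelSpace 𝒳] [MeasurableSpace 𝒯]
    (μ : Measure Θ) [IsProbabilityMeasure μ]
    (κ : Kernel Θ 𝒳) [IsMarkovKernel κ]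
    (ρ : Measure (𝒳 × Θ)) (hρ : ρ = (μ.compProd κ).map Prod.swap)
    (M : Measure 𝒳) (hM : M = ρ.fst)
    (post : Kernel 𝒳 Θ) [IsMarkovKernel post] (hpost : ρ = M.compProd post)
    (Υ : Θ → 𝒯) (hΥ : Measurable Υ)
    (C : 𝒳 → Set 𝒯) (hC : MeasurableSet {p : 𝒳 × 𝒯 | p.2 ∈ C p.1})
    (hgt : ∀ᵐ x ∂M, μ (Υ ⁻¹' (C x)) < post x (Υ ⁻¹' (C x))) :
    ∫⁻ x, μ (Υ ⁻¹' (C x)) ∂M < ∫⁻ θ, κ θ {x | Υ θ ∈ C x} ∂μ := by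
  haveI : IsProbabilityMeasure ρ := by
    rw [hρ]; exact Measure.isProbabilityMeasure_map measurable_swap.aemeasurable
  haveI : IsProbabilityMeasure M := by rw [hM]; infer_instance
  set s : Set (𝒳 × Θ) := {p | Υ p.2 ∈ C p.1} with hsdef
  have hs : MeasurableSet s :=
    hC.preimage (measurable_fst.prodMk (hΥ.comp measurable_snd))
  -- RHS = ρ s
  have hRHS : ∫⁻ θ, κ θ {x | Υ θ ∈ C x} ∂μ = ρ s := by
    rw [hρ, Measure.map_apply measurable_swap hs,
      Measure.compProd_apply (measurable_swap hs)]
    rfl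
  -- ρ s = ∫ post x (Υ⁻¹' C x) dM
  have hdisint : ρ s = ∫⁻ x, post x (Υ ⁻¹' (C x)) ∂M := by
    rw [hpost, Measure.compProd_apply hs]
    rfl
  rw [hRHS, hdisint]
  refine lintegral_strict_mono ?_ ?_ ?_ hgt
  · exact (IsProbabilityMeasure.ne_zero M)
  · exact (Kernel.measurable_kernel_prodMk_left hs).aemeasurable
  · have h1 : ∫⁻ x, μ (Υ ⁻¹' (C x)) ∂M ≤ 1 := by
      calc ∫⁻ x, μ (Υ ⁻¹' (C x)) ∂M ≤ ∫⁻ _, 1 ∂M :=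
            lintegral_mono fun x => prob_le_one
        _ = 1 := by simp
    exact ne_top_of_le_ne_top ENNReal.one_ne_top h1
end

section
/- Let 𝒯 ⊆ ℝᵏ be open, let P be a probability measure on 𝒯 with density p with respect to Lebesgue measure, let Λ be a measure on 𝒯 with density λ with respect to Lebesgue measure with λ > 0 on 𝒯, and let Ψ : 𝒯 → 𝒯 be a bijection that is continuously differentiable with continuously differentiable inverse, with Jacobian J_Ψ(τ) = |det DΨ(τ)| > 0. Fix γ ∈ [0,1]. Define B_{Λ∘Ψ,γ} = {τ₀ ∈ 𝒯 : P({τ : p(τ)/(λ(Ψ(τ))J_Ψ(τ)) > p(τ₀)/(λ(Ψ(τ₀))J_Ψ(τ₀))}) ≤ γ} and B^Ψ_{Λ,γ} = {ψ₀ ∈ 𝒯 : P({τ : p(τ)J_Ψ(τ)⁻¹/λ(Ψ(τ)) > p(Ψ⁻¹(ψ₀))J_Ψ(Ψ⁻¹(ψ₀))⁻¹/λ(ψ₀)}) ≤ γ}. Then Ψ⁻¹(B^Ψ_{Λ,γ}) = B_{Λ∘Ψ,γ}. -/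
open MeasureTheory
open scoped ENNReal NNReal

/-- Lemma 10: the pullback under `Ψ` of the `Λ`-optimal hpd-like γ-credible
region for `ψ = Ψ(τ)` equals the `(Λ∘Ψ)`-optimal hpd-like γ-credible region
for `τ`. -/
theorem pullback_hpd_region_eq
    {k : ℕ} (𝒯 : Set (EuclideanSpace ℝ (Fin k))) (hT : IsOpen 𝒯)
    (Ψ Ψinv : EuclideanSpace ℝ (Fin k) → EuclideanSpace ℝ (Fin k))
    (hbij : Set.BijOn Ψ 𝒯 𝒯) (hinv : Set.InvOn Ψinv Ψ 𝒯 𝒯)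
    (hΨ : ContDiffOn ℝ 1 Ψ 𝒯) (hΨinv : ContDiffOn ℝ 1 Ψinv 𝒯)
    (p : EuclideanSpace ℝ (Fin k) → ℝ≥0∞) (hp : Measurable p)
    (P : Measure (EuclideanSpace ℝ (Fin k))) [IsProbabilityMeasure P]
    (hP : P = volume.withDensity p)
    (l : EuclideanSpace ℝ (Fin k) → ℝ≥0∞) (hl : Measurable l)
    (hlpos : ∀ τ ∈ 𝒯, 0 < l τ)
    (J : EuclideanSpace ℝ (Fin k) → ℝ≥0∞)
    (hJ : J = fun τ => ENNReal.ofReal |(fderiv ℝ Ψ τ).det|)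
    (hJpos : ∀ τ ∈ 𝒯, 0 < J τ)
    (γ : ℝ≥0∞) (hγ : γ ≤ 1) :
    {τ ∈ 𝒯 | Ψ τ ∈
        {ψ₀ ∈ 𝒯 | P {τ' ∈ 𝒯 |
            p τ' * (J τ')⁻¹ / l (Ψ τ') >
              p (Ψinv ψ₀) * (J (Ψinv ψ₀))⁻¹ / l ψ₀} ≤ γ}} =
      {τ₀ ∈ 𝒯 | P {τ' ∈ 𝒯 |
          p τ' / (l (Ψ τ') * J τ') > p τ₀ / (l (Ψ τ₀) * J τ₀)} ≤ γ} := by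
  have key : ∀ τ ∈ 𝒯, p τ * (J τ)⁻¹ / l (Ψ τ) = p τ / (l (Ψ τ) * J τ) := by
    intro τ hτ
    have hJ0 : J τ ≠ 0 := (hJpos τ hτ).ne'
    have hl0 : l (Ψ τ) ≠ 0 := (hlpos _ (hbij.mapsTo hτ)).ne'
    rw [div_eq_mul_inv, div_eq_mul_inv,
      ENNReal.mul_inv (Or.inl hl0) (Or.inr hJ0)]
    ring
  ext τ₀
  simp only [Set.mem_setOf_eq]
  constructor
  · rintro ⟨hτ₀, -, hle⟩
    refine ⟨hτ₀, ?_⟩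
    have h2 : Ψinv (Ψ τ₀) = τ₀ := hinv.1 hτ₀
    have : {τ' | τ' ∈ 𝒯 ∧ p τ' * (J τ')⁻¹ / l (Ψ τ') >
        p (Ψinv (Ψ τ₀)) * (J (Ψinv (Ψ τ₀)))⁻¹ / l (Ψ τ₀)} =
        {τ' | τ' ∈ 𝒯 ∧ p τ' / (l (Ψ τ') * J τ') > p τ₀ / (l (Ψ τ₀) * J τ₀)} := by
      ext τ'
      simp only [Set.mem_setOf_eq, h2, and_congr_right_iff]
      intro hτ'
      rw [key τ' hτ', key τ₀ hτ₀]
    rwa [this] at hle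
  · rintro ⟨hτ₀, hle⟩
    refine ⟨hτ₀, hbij.mapsTo hτ₀, ?_⟩
    have h2 : Ψinv (Ψ τ₀) = τ₀ := hinv.1 hτ₀
    have : {τ' | τ' ∈ 𝒯 ∧ p τ' * (J τ')⁻¹ / l (Ψ τ') >
        p (Ψinv (Ψ τ₀)) * (J (Ψinv (Ψ τ₀)))⁻¹ / l (Ψ τ₀)} =
        {τ' | τ' ∈ 𝒯 ∧ p τ' / (l (Ψ τ') * J τ') > p τ₀ / (l (Ψ τ₀) * J τ₀)} := by
      ext τ'
      simp only [Set.mem_setOf_eq, h2, and_congr_right_iff]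
      intro hτ'
      rw [key τ' hτ', key τ₀ hτ₀]
    rwa [this]
end
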